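/- If X_i, i ∈ I, are pairwise disjoint and connected binary structures, then ⋃_{i∈I} X_i is reversible if and only if ⋃_{i∈J} X_i is reversible for every non-empty set J ⊆ I. Consequently, if ⋃_{i∈I} X_i is reversible, then every component X_i, i ∈ I, is reversible. -/
import Mathlib


universe u v w

section Defs

variable {α : Type*} {β : Type*}

/-- `f` is a homomorphism from `⟨α, r⟩` to `⟨β, s⟩`. -/
def IsHom (r : α → α → Prop) (s : β → β → Prop) (f : α → β) : Prop :=
  ∀ x y, r x y → s (f x) (f y)

/-- A condensation is a bijective homomorphism. -/
def IsCond (r : α → α → Prop) (s : β → β → Prop) (f : α → β) : Prop :=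
  Function.Bijective f ∧ IsHom r s f

/-- A monomorphism is an injective homomorphism. -/
def IsMono (r : α → α → Prop) (s : β → β → Prop) (f : α → β) : Prop :=
  Function.Injective f ∧ IsHom r s f

/-- An isomorphism of binary structures. -/
def IsIso (r : α → α → Prop) (s : β → β → Prop) (f : α → β) : Prop :=
  Function.Bijective f ∧ ∀ x y, r x y ↔ s (f x) (f y)

/-- A binary structure is reversible iff every self-condensation is an automorphism. -/
def Reversible (r : α → α → Prop) : Prop :=
  ∀ f : α → α, IsCond r r f → IsIso r r f

/-- A binary structure is connected iff it has exactly one component: it is nonempty and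
the least equivalence relation containing `r` relates any two points. -/
def Connected (r : α → α → Prop) : Prop :=
  Nonempty α ∧ ∀ x y, Relation.EqvGen r x y

/-- The relation of the disjoint union of the structures `⟨X i, R i⟩`. -/
def unionRel {I : Type*} {X : I → Type*} (R : ∀ i, X i → X i → Prop) :
    (Σ i, X i) → (Σ i, X i) → Prop :=
  fun a b => ∃ h : a.1 = b.1, R b.1 (h ▸ a.2) b.2

end Defs

lemma unionRel_mk {I : Type*} {X : I → Type*} (R : ∀ i, X i → X i → Prop)
    {i : I} {x y : X i} : unionRel R ⟨i, x⟩ ⟨i, y⟩ ↔ R i x y := by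
  constructor
  · rintro ⟨h, hr⟩; exact hr
  · intro hr; exact ⟨rfl, hr⟩

lemma unionRel_cases {I : Type*} {X : I → Type*} (R : ∀ i, X i → X i → Prop)
    {a b : Σ i, X i} (h : unionRel R a b) :
    ∃ (i : I) (x y : X i), a = ⟨i, x⟩ ∧ b = ⟨i, y⟩ ∧ R i x y := by
  obtain ⟨i, x⟩ := a
  obtain ⟨j, y⟩ := b
  obtain ⟨h, hr⟩ := h
  cases h
  exact ⟨i, x, y, rfl, rfl, hr⟩

/-- Transport of reversibility along a relation-preserving equivalence. -/
lemma reversible_of_equiv {α β : Type*} {r : α → α → Prop} {s : β → β → Prop}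
    (e : α ≃ β) (he : ∀ x y, r x y ↔ s (e x) (e y)) (hs : Reversible s) :
    Reversible r := by
  intro f hf
  have he' : ∀ x y, s x y ↔ r (e.symm x) (e.symm y) := by
    intro x y
    rw [he (e.symm x) (e.symm y), e.apply_symm_apply, e.apply_symm_apply]
  have hg : IsCond s s (e ∘ f ∘ e.symm) := by
    refine ⟨(e.bijective.comp hf.1).comp e.symm.bijective, ?_⟩
    intro x y hxy
    rw [he']
    simp only [Function.comp_apply, Equiv.symm_apply_apply]
    exact hf.2 _ _ ((he' x y).mp hxy)
  have hiso := hs _ hg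
  refine ⟨hf.1, fun x y => ?_⟩
  have := hiso.2 (e x) (e y)
  simp only [Function.comp_apply, Equiv.symm_apply_apply] at this
  rw [he x y, this, ← he]

section Embed

variable {I : Type u} {X : I → Type v} (R : ∀ i, X i → X i → Prop) (J : Set I)

def embed : (Σ j : J, X j.1) → Σ i, X i := fun a => ⟨a.1.1, a.2⟩

lemma embed_inj : Function.Injective (embed (X := X) J) := by
  rintro ⟨⟨i, hi⟩, x⟩ ⟨⟨j, hj⟩, y⟩ h
  simp only [embed, Sigma.mk.inj_iff] at h
  obtain ⟨rfl, h⟩ := h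
  cases h
  rfl

lemma unionRel_embed {a b : Σ j : J, X j.1} :
    unionRel (fun j : J => R j.1) a b ↔ unionRel R (embed J a) (embed J b) := by
  obtain ⟨⟨i, hi⟩, x⟩ := a
  obtain ⟨⟨j, hj⟩, y⟩ := b
  constructor
  · rintro ⟨h, hr⟩
    obtain rfl : i = j := congrArg Subtype.val h
    exact ⟨rfl, hr⟩
  · rintro ⟨h, hr⟩
    obtain rfl : i = j := h
    exact ⟨rfl, hr⟩

/-- Extension lemma: reversibility of the full union passes to subunions. -/
lemma reversible_subunion (hrev : Reversible (unionRel R)) :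
    Reversible (unionRel (fun j : J => R j.1)) := by
  classical
  intro g hg
  set F : (Σ i, X i) → Σ i, X i :=
    fun a => if h : a.1 ∈ J then embed J (g ⟨⟨a.1, h⟩, a.2⟩) else a with hF
  have hFembed : ∀ a : Σ j : J, X j.1, F (embed J a) = embed J (g a) := by
    rintro ⟨⟨i, hi⟩, x⟩
    simp only [hF, embed, dif_pos hi]
  have hFnot : ∀ a : Σ i, X i, a.1 ∉ J → F a = a := by
    intro a ha; simp only [hF, dif_neg ha]
  have hmemF : ∀ a : Σ i, X i, a.1 ∈ J → (F a).1 ∈ J := by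
    intro a ha
    simp only [hF, dif_pos ha, embed]
    exact (g ⟨⟨a.1, ha⟩, a.2⟩).1.2
  have hFinj : Function.Injective F := by
    intro a b hab
    by_cases ha : a.1 ∈ J <;> by_cases hb : b.1 ∈ J
    · have hab' : embed J (g ⟨⟨a.1, ha⟩, a.2⟩) = embed J (g ⟨⟨b.1, hb⟩, b.2⟩) := by
        simpa only [hF, dif_pos ha, dif_pos hb] using hab
      exact congrArg (embed J) (hg.1.1 (embed_inj J hab'))
    · have h1 := hmemF a ha
      rw [hab, hFnot b hb] at h1; exact absurd h1 hb
    · have h1 := hmemF b hb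
      rw [← hab, hFnot a ha] at h1; exact absurd h1 ha
    · rw [hFnot a ha, hFnot b hb] at hab; exact hab
  have hFsurj : Function.Surjective F := by
    intro c
    by_cases hc : c.1 ∈ J
    · obtain ⟨d, hd⟩ := hg.1.2 ⟨⟨c.1, hc⟩, c.2⟩
      refine ⟨embed J d, ?_⟩
      rw [hFembed, hd]
      rfl
    · exact ⟨c, hFnot c hc⟩
  have hFhom : IsHom (unionRel R) (unionRel R) F := by
    intro a b hab
    obtain ⟨i, x, y, rfl, rfl, hr⟩ := unionRel_cases _ hab
    by_cases hi : i ∈ J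
    · have h1 : F ⟨i, x⟩ = embed J (g ⟨⟨i, hi⟩, x⟩) := by
        simp only [hF, dif_pos hi]
      have h2 : F ⟨i, y⟩ = embed J (g ⟨⟨i, hi⟩, y⟩) := by
        simp only [hF, dif_pos hi]
      rw [h1, h2, ← unionRel_embed]
      exact hg.2 _ _ ((unionRel_embed R J).mpr ((unionRel_mk R).mpr hr))
    · rw [hFnot ⟨i, x⟩ hi, hFnot ⟨i, y⟩ hi]
      exact hab
  have hFiso := hrev F ⟨⟨hFinj, hFsurj⟩, hFhom⟩
  refine ⟨hg.1, fun a b => ?_⟩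
  have key := hFiso.2 (embed J a) (embed J b)
  rw [hFembed, hFembed] at key
  rw [unionRel_embed R J, key, ← unionRel_embed R J]

end Embed


/-- **Theorem (Statement 1).** If `⟨X i, R i⟩`, `i ∈ I`, are pairwise disjoint (realized by a
sigma type) connected binary structures, then the disjoint union `⋃_{i∈I} X i` is reversible iff
`⋃_{i∈J} X i` is reversible for every non-empty `J ⊆ I`; consequently, if `⋃_{i∈I} X i` is
reversible, then every component `X i` is reversible. -/
theorem stmt1 {I : Type u} {X : I → Type v} (R : ∀ i, X i → X i → Prop)
    (hconn : ∀ i, Connected (R i)) :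
    (Reversible (unionRel R) ↔
        ∀ J : Set I, J.Nonempty → Reversible (unionRel (fun j : J => R j.1))) ∧
    (Reversible (unionRel R) → ∀ i : I, Reversible (R i)) := by
  have part2 : Reversible (unionRel R) → ∀ i : I, Reversible (R i) := by
    intro hrev i
    have hsub := reversible_subunion R ({i} : Set I) hrev
    refine reversible_of_equiv ?_ ?_ hsub
    · exact
        { toFun := fun x => ⟨⟨i, rfl⟩, x⟩
          invFun := fun b => (show b.1.1 = i from b.1.2) ▸ b.2
          left_inv := fun x => rfl
          right_inv := by rintro ⟨⟨j, hj⟩, x⟩; obtain rfl : j = i := hj; rfl }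
    · intro x y
      exact (unionRel_mk (fun j : ({i} : Set I) => R j.1)
        (i := ⟨i, rfl⟩) (x := x) (y := y)).symm
  constructor
  · constructor
    · intro hrev J _
      exact reversible_subunion R J hrev
    · intro hall
      by_cases hI : Nonempty I
      · obtain ⟨i0⟩ := hI
        have hsub := hall Set.univ ⟨i0, trivial⟩
        refine reversible_of_equiv ?_ ?_ hsub
        · exact
            { toFun := fun a => ⟨⟨a.1, trivial⟩, a.2⟩
              invFun := embed Set.univ
              left_inv := fun a => rfl
              right_inv := by rintro ⟨⟨j, hj⟩, x⟩; rfl }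
        · intro a b
          exact (unionRel_embed R Set.univ
            (a := ⟨⟨a.1, trivial⟩, a.2⟩) (b := ⟨⟨b.1, trivial⟩, b.2⟩)).symm
      · intro f hf
        exact ⟨hf.1, fun x y => absurd ⟨x.1⟩ hI⟩
  · exact part2
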